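/- Define on ℝ³ the antisymmetric matrix fields P'₁, P'₂, P'₃ with nonzero upper-triangular entries (P'₁)₁₂ = −b₂M₃, (P'₁)₁₃ = −b₃M₂; (P'₂)₁₂ = b₁M₃, (P'₂)₂₃ = −b₃M₁; (P'₃)₁₃ = b₁M₂, (P'₃)₂₃ = b₂M₁ (all other upper entries zero, lower entries by antisymmetry), where b₁ = a₂−a₃, b₂ = a₃−a₁, b₃ = a₁−a₂. Then: (a) b₁P'₁ + b₂P'₂ + b₃P'₃ = 0 identically; (b) for the Euler vector field X = (b₁M₂M₃, b₂M₃M₁, b₃M₁M₂) and f₁ = ½(a₁M₁² + a₂M₂² + a₃M₃²), f₂ = M₁² + M₂² + M₃², one has P'_i∇f₁ = a_i X and P'_i∇f₂ = 2X for each i = 1,2,3, where (P∇f)_j = ∑_k P_{jk} ∂f/∂M_k; (c) for all λ₁, λ₂, λ₃ ∈ ℝ the combination λ₁P'₁ + λ₂P'₂ + λ₃P'₃ satisfies the Jacobi identity ∑_l ( P_{li} ∂P_{jk}/∂M_l + P_{lj} ∂P_{ki}/∂M_l + P_{lk} ∂P_{ij}/∂M_l ) = 0. -/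

import Mathlib

noncomputable section

open scoped BigOperators

/-- Partial derivative of `f` in the `i`-th coordinate direction at `x`. -/
def pd {n : ℕ} (i : Fin n) (f : (Fin n → ℝ) → ℝ) (x : Fin n → ℝ) : ℝ :=
  fderiv ℝ f x (Pi.single i 1)

/-- The Euler vector field `X = (b₁M₂M₃, b₂M₃M₁, b₃M₁M₂)` on `ℝ³`, where
`b₁ = a₂ − a₃`, `b₂ = a₃ − a₁`, `b₃ = a₁ − a₂`. -/
def eulerX (a₁ a₂ a₃ : ℝ) (x : Fin 3 → ℝ) : Fin 3 → ℝ :=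
  ![(a₂ - a₃) * x 1 * x 2, (a₃ - a₁) * x 2 * x 0, (a₁ - a₂) * x 0 * x 1]

/-- The first integral `f₁ = ½(a₁M₁² + a₂M₂² + a₃M₃²)`. -/
def eulerF₁ (a₁ a₂ a₃ : ℝ) (x : Fin 3 → ℝ) : ℝ :=
  (a₁ * x 0 ^ 2 + a₂ * x 1 ^ 2 + a₃ * x 2 ^ 2) / 2

/-- The first integral `f₂ = M₁² + M₂² + M₃²`. -/
def eulerF₂ (x : Fin 3 → ℝ) : ℝ := x 0 ^ 2 + x 1 ^ 2 + x 2 ^ 2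

/-- Contraction of a matrix field with the gradient of a function:
`(P∇f)_i = ∑_j P_{ij} ∂f/∂x_j`. -/
def Pgrad {n : ℕ} (P : (Fin n → ℝ) → Matrix (Fin n) (Fin n) ℝ)
    (f : (Fin n → ℝ) → ℝ) (x : Fin n → ℝ) (i : Fin n) : ℝ :=
  ∑ j, P x i j * pd j f x

/-- Lie derivative of a (2,0) tensor (matrix field) `P` along the vector field `X`:
`(L_X P)_{ij} = ∑_k (X_k ∂P_{ij}/∂x_k − P_{kj} ∂X_i/∂x_k − P_{ik} ∂X_j/∂x_k)`. -/
def matLie {n : ℕ} (X : (Fin n → ℝ) → Fin n → ℝ)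
    (P : (Fin n → ℝ) → Matrix (Fin n) (Fin n) ℝ) (x : Fin n → ℝ) (i j : Fin n) : ℝ :=
  ∑ k, (X x k * pd k (fun y => P y i j) x - P x k j * pd k (fun y => X y i) x
        - P x i k * pd k (fun y => X y j) x)

/-- The Jacobiator of an antisymmetric matrix field; it vanishes identically iff `P`
satisfies the Jacobi identity (i.e. is a Poisson bivector). -/
def jacobiator {n : ℕ} (P : (Fin n → ℝ) → Matrix (Fin n) (Fin n) ℝ)
    (x : Fin n → ℝ) (i j k : Fin n) : ℝ :=
  ∑ l, (P x l i * pd l (fun y => P y j k) x + P x l j * pd l (fun y => P y k i) x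
        + P x l k * pd l (fun y => P y i j) x)

/-- The invariant bivector `P'₁` of the Euler case, with upper entries
`(P'₁)₁₂ = −b₂M₃`, `(P'₁)₁₃ = −b₃M₂` (`b₂ = a₃ − a₁`, `b₃ = a₁ − a₂`). -/
def eulerP'₁ (a₁ a₂ a₃ : ℝ) (x : Fin 3 → ℝ) : Matrix (Fin 3) (Fin 3) ℝ :=
  !![0, -((a₃ - a₁) * x 2), -((a₁ - a₂) * x 1);
     (a₃ - a₁) * x 2, 0, 0;
     (a₁ - a₂) * x 1, 0, 0]

/-- The invariant bivector `P'₂`, with upper entries `(P'₂)₁₂ = b₁M₃`,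
`(P'₂)₂₃ = −b₃M₁` (`b₁ = a₂ − a₃`, `b₃ = a₁ − a₂`). -/
def eulerP'₂ (a₁ a₂ a₃ : ℝ) (x : Fin 3 → ℝ) : Matrix (Fin 3) (Fin 3) ℝ :=
  !![0, (a₂ - a₃) * x 2, 0;
     -((a₂ - a₃) * x 2), 0, -((a₁ - a₂) * x 0);
     0, (a₁ - a₂) * x 0, 0]

/-- The invariant bivector `P'₃`, with upper entries `(P'₃)₁₃ = b₁M₂`,
`(P'₃)₂₃ = b₂M₁` (`b₁ = a₂ − a₃`, `b₂ = a₃ − a₁`). -/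
def eulerP'₃ (a₁ a₂ a₃ : ℝ) (x : Fin 3 → ℝ) : Matrix (Fin 3) (Fin 3) ℝ :=
  !![0, 0, (a₂ - a₃) * x 1;
     0, 0, (a₃ - a₁) * x 0;
     -((a₂ - a₃) * x 1), -((a₃ - a₁) * x 0), 0]

/- ### Auxiliary lemmas -/

lemma pd_cmul {n : ℕ} (i m : Fin n) (c : ℝ) (x : Fin n → ℝ) :
    pd i (fun y => c * y m) x = if m = i then c else 0 := by
  have h : HasFDerivAt (fun y : Fin n → ℝ => c * y m)
      (c • ContinuousLinearMap.proj m) x :=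
    ((ContinuousLinearMap.proj m : (Fin n → ℝ) →L[ℝ] ℝ).hasFDerivAt).const_mul c
  rw [pd, h.fderiv]
  simp [Pi.single_apply]

lemma pd_neg_cmul {n : ℕ} (i m : Fin n) (c : ℝ) (x : Fin n → ℝ) :
    pd i (fun y => -(c * y m)) x = if m = i then -c else 0 := by
  have he : (fun y : Fin n → ℝ => -(c * y m)) = fun y => (-c) * y m := by
    funext y; ring
  rw [he, pd_cmul]

lemma pd_zero {n : ℕ} (i : Fin n) (x : Fin n → ℝ) :
    pd i (fun _ => (0:ℝ)) x = 0 := by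
  rw [pd, fderiv_fun_const]; simp

lemma pd_f₁ (a₁ a₂ a₃ : ℝ) (i : Fin 3) (x : Fin 3 → ℝ) :
    pd i (eulerF₁ a₁ a₂ a₃) x = ![a₁ * x 0, a₂ * x 1, a₃ * x 2] i := by
  have hp : ∀ m : Fin 3, HasFDerivAt (fun y : Fin 3 → ℝ => y m)
      (ContinuousLinearMap.proj m : (Fin 3 → ℝ) →L[ℝ] ℝ) x := fun m =>
    (ContinuousLinearMap.proj m : (Fin 3 → ℝ) →L[ℝ] ℝ).hasFDerivAt
  have h : HasFDerivAt (eulerF₁ a₁ a₂ a₃)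
      ((2:ℝ)⁻¹ • (a₁ • (x 0 • (ContinuousLinearMap.proj 0 : (Fin 3 → ℝ) →L[ℝ] ℝ)
          + x 0 • (ContinuousLinearMap.proj 0 : (Fin 3 → ℝ) →L[ℝ] ℝ))
        + a₂ • (x 1 • (ContinuousLinearMap.proj 1 : (Fin 3 → ℝ) →L[ℝ] ℝ)
          + x 1 • (ContinuousLinearMap.proj 1 : (Fin 3 → ℝ) →L[ℝ] ℝ))
        + a₃ • (x 2 • (ContinuousLinearMap.proj 2 : (Fin 3 → ℝ) →L[ℝ] ℝ)
          + x 2 • (ContinuousLinearMap.proj 2 : (Fin 3 → ℝ) →L[ℝ] ℝ)))) x := by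
    have he : eulerF₁ a₁ a₂ a₃ =
        fun y : Fin 3 → ℝ => (2:ℝ)⁻¹ * (a₁ * (y 0 * y 0) + a₂ * (y 1 * y 1) + a₃ * (y 2 * y 2)) := by
      funext y; simp [eulerF₁]; ring
    rw [he]
    exact ((((hp 0).mul (hp 0)).const_mul a₁ |>.add (((hp 1).mul (hp 1)).const_mul a₂)
      |>.add (((hp 2).mul (hp 2)).const_mul a₃))).const_mul ((2:ℝ)⁻¹)
  rw [pd, h.fderiv]
  fin_cases i <;> simp [Pi.single_apply] <;> ring

lemma pd_f₂ (i : Fin 3) (x : Fin 3 → ℝ) :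
    pd i eulerF₂ x = 2 * x i := by
  have hp : ∀ m : Fin 3, HasFDerivAt (fun y : Fin 3 → ℝ => y m)
      (ContinuousLinearMap.proj m : (Fin 3 → ℝ) →L[ℝ] ℝ) x := fun m =>
    (ContinuousLinearMap.proj m : (Fin 3 → ℝ) →L[ℝ] ℝ).hasFDerivAt
  have h : HasFDerivAt eulerF₂
      ((x 0 • (ContinuousLinearMap.proj 0 : (Fin 3 → ℝ) →L[ℝ] ℝ)
          + x 0 • (ContinuousLinearMap.proj 0 : (Fin 3 → ℝ) →L[ℝ] ℝ))
        + (x 1 • (ContinuousLinearMap.proj 1 : (Fin 3 → ℝ) →L[ℝ] ℝ)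
          + x 1 • (ContinuousLinearMap.proj 1 : (Fin 3 → ℝ) →L[ℝ] ℝ))
        + (x 2 • (ContinuousLinearMap.proj 2 : (Fin 3 → ℝ) →L[ℝ] ℝ)
          + x 2 • (ContinuousLinearMap.proj 2 : (Fin 3 → ℝ) →L[ℝ] ℝ))) x := by
    have he : eulerF₂ =
        fun y : Fin 3 → ℝ => y 0 * y 0 + y 1 * y 1 + y 2 * y 2 := by
      funext y; simp [eulerF₂]; ring
    rw [he]
    exact (((hp 0).mul (hp 0)).add ((hp 1).mul (hp 1))).add ((hp 2).mul (hp 2))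
  rw [pd, h.fderiv]
  fin_cases i <;> simp [Pi.single_apply] <;> ring

/-- canonical antisymmetric linear bivector on ℝ³ -/
def Q3 (α β γ : ℝ) (y : Fin 3 → ℝ) : Matrix (Fin 3) (Fin 3) ℝ :=
  !![0, α * y 2, β * y 1;
     (-α) * y 2, 0, γ * y 0;
     (-β) * y 1, (-γ) * y 0, 0]

lemma jac_Q3 (α β γ : ℝ) (x : Fin 3 → ℝ) (i j k : Fin 3) :
    jacobiator (Q3 α β γ) x i j k = 0 := by
  fin_cases i <;> fin_cases j <;> fin_cases k <;>
    simp [jacobiator, Q3, Fin.sum_univ_three, pd_cmul, pd_neg_cmul, pd_zero] <;> ring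

/-- The frame of invariant bivectors `P'₁, P'₂, P'₃` of the Euler case:
(a) `b₁P'₁ + b₂P'₂ + b₃P'₃ = 0`; (b) `P'_i∇f₁ = a_i X` and `P'_i∇f₂ = 2X` for each `i`;
(c) every real linear combination `λ₁P'₁ + λ₂P'₂ + λ₃P'₃` satisfies the Jacobi identity. -/
theorem euler_bivector_frame (a₁ a₂ a₃ : ℝ) :
    (∀ x : Fin 3 → ℝ,
      (a₂ - a₃) • eulerP'₁ a₁ a₂ a₃ x + (a₃ - a₁) • eulerP'₂ a₁ a₂ a₃ x
        + (a₁ - a₂) • eulerP'₃ a₁ a₂ a₃ x = 0) ∧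
    (∀ x i, Pgrad (eulerP'₁ a₁ a₂ a₃) (eulerF₁ a₁ a₂ a₃) x i = a₁ * eulerX a₁ a₂ a₃ x i) ∧
    (∀ x i, Pgrad (eulerP'₂ a₁ a₂ a₃) (eulerF₁ a₁ a₂ a₃) x i = a₂ * eulerX a₁ a₂ a₃ x i) ∧
    (∀ x i, Pgrad (eulerP'₃ a₁ a₂ a₃) (eulerF₁ a₁ a₂ a₃) x i = a₃ * eulerX a₁ a₂ a₃ x i) ∧
    (∀ x i, Pgrad (eulerP'₁ a₁ a₂ a₃) eulerF₂ x i = 2 * eulerX a₁ a₂ a₃ x i) ∧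
    (∀ x i, Pgrad (eulerP'₂ a₁ a₂ a₃) eulerF₂ x i = 2 * eulerX a₁ a₂ a₃ x i) ∧
    (∀ x i, Pgrad (eulerP'₃ a₁ a₂ a₃) eulerF₂ x i = 2 * eulerX a₁ a₂ a₃ x i) ∧
    (∀ l₁ l₂ l₃ : ℝ, ∀ x, ∀ i j k : Fin 3,
      jacobiator (fun y => l₁ • eulerP'₁ a₁ a₂ a₃ y + l₂ • eulerP'₂ a₁ a₂ a₃ y
        + l₃ • eulerP'₃ a₁ a₂ a₃ y) x i j k = 0) := by
  refine ⟨?_, ?_, ?_, ?_, ?_, ?_, ?_, ?_⟩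
  · intro x
    ext i j
    fin_cases i <;> fin_cases j <;>
      simp [eulerP'₁, eulerP'₂, eulerP'₃] <;> ring
  · intro x i
    fin_cases i <;>
      simp [Pgrad, Fin.sum_univ_three, pd_f₁, eulerP'₁, eulerX] <;> ring
  · intro x i
    fin_cases i <;>
      simp [Pgrad, Fin.sum_univ_three, pd_f₁, eulerP'₂, eulerX] <;> ring
  · intro x i
    fin_cases i <;>
      simp [Pgrad, Fin.sum_univ_three, pd_f₁, eulerP'₃, eulerX] <;> ring
  · intro x i
    fin_cases i <;>
      simp [Pgrad, Fin.sum_univ_three, pd_f₂, eulerP'₁, eulerX] <;> ring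
  · intro x i
    fin_cases i <;>
      simp [Pgrad, Fin.sum_univ_three, pd_f₂, eulerP'₂, eulerX] <;> ring
  · intro x i
    fin_cases i <;>
      simp [Pgrad, Fin.sum_univ_three, pd_f₂, eulerP'₃, eulerX] <;> ring
  · intro l₁ l₂ l₃ x i j k
    have hQ : (fun y => l₁ • eulerP'₁ a₁ a₂ a₃ y + l₂ • eulerP'₂ a₁ a₂ a₃ y
        + l₃ • eulerP'₃ a₁ a₂ a₃ y)
        = Q3 (l₂ * (a₂ - a₃) - l₁ * (a₃ - a₁)) (l₃ * (a₂ - a₃) - l₁ * (a₁ - a₂))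
            (l₃ * (a₃ - a₁) - l₂ * (a₁ - a₂)) := by
      funext y
      ext i j
      fin_cases i <;> fin_cases j <;>
        simp [eulerP'₁, eulerP'₂, eulerP'₃, Q3] <;> ring
    rw [hQ, jac_Q3]
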